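/- For 0 ≤ k < n, p(n,k+1,0) = p(n,k,0) - (1/n)·p(n-1,k,0). -/

import Mathlib

open Equiv Finset


/-- `c n k d` : number of permutations of `{1,...,n}` (modeled as `Fin n`)
with exactly `d` fixed points among the first `k` points. -/
noncomputable def c (n k d : ℕ) : ℕ :=
  Nat.card {α : Equiv.Perm (Fin n) //
    (Finset.univ.filter (fun i : Fin n => (i : ℕ) < k ∧ α i = i)).card = d}

/-- `p n k d = c n k d / n!`, the probability that a uniformly random permutation
of `[n]` has exactly `d` fixed points among the first `k` points. -/
noncomputable def p (n k d : ℕ) : ℝ := (c n k d : ℝ) / (Nat.factorial n)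

/-- `f n k d = c (n-1) k d / c n k d`, the conditional probability that the
`(k+1)`-st point is fixed given exactly `d` fixed points among the first `k` points. -/
noncomputable def f (n k d : ℕ) : ℝ := (c (n - 1) k d : ℝ) / (c n k d)

lemma c_eq (n k : ℕ) :
    c n k 0 = (univ.filter (fun σ : Perm (Fin n) =>
      ∀ i : Fin n, (i : ℕ) < k → σ i ≠ i)).card := by
  rw [c, Nat.card_eq_fintype_card, Fintype.card_subtype]
  congr 1
  ext σ
  simp only [card_eq_zero, filter_eq_empty_iff, mem_univ, true_imp_iff, not_and]

lemma key (m k : ℕ) (hk : k < m + 1) :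
    c (m + 1) (k + 1) 0 + c m k 0 = c (m + 1) k 0 := by
  classical
  set km : Fin (m + 1) := ⟨k, hk⟩ with hkm
  have hval : ∀ i : Fin m, ((km.succAbove i : Fin (m+1)) : ℕ) =
      if (i : ℕ) < k then (i : ℕ) else (i : ℕ) + 1 := by
    intro i
    rcases lt_or_ge (i : ℕ) k with h | h
    · rw [Fin.succAbove_of_castSucc_lt, Fin.coe_castSucc, if_pos h]
      simpa [Fin.lt_def] using h
    · rw [Fin.succAbove_of_le_castSucc, Fin.val_succ, if_neg (by omega)]
      simpa [Fin.le_def] using h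
  let e : Fin m ≃ {x : Fin (m+1) // x ≠ km} := finSuccAboveEquiv km
  have he : ∀ i : Fin m, (e i : Fin (m+1)) = km.succAbove i := by
    intro i; rw [finSuccAboveEquiv_apply]
  have hsurj : ∀ x : Fin (m+1), x ≠ km → ∃ j, km.succAbove j = x := by
    intro x hx
    exact ⟨e.symm ⟨x, hx⟩, by rw [← he, e.apply_symm_apply]⟩
  let Φ : Perm (Fin m) → Perm (Fin (m+1)) := fun σ => Perm.ofSubtype (e.permCongr σ)
  have hΦkm : ∀ σ, Φ σ km = km := fun σ =>
    Perm.ofSubtype_apply_of_not_mem _ (by simp)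
  have hΦapp : ∀ σ (i : Fin m), Φ σ (km.succAbove i) = km.succAbove (σ i) := by
    intro σ i
    have h1 := Perm.ofSubtype_apply_of_mem (e.permCongr σ) (e i).2
    show Perm.ofSubtype (e.permCongr σ) (km.succAbove i) = km.succAbove (σ i)
    rw [← he i, ← he (σ i), h1]
    congr 1
    simp [Equiv.permCongr_apply]
  set T : Finset (Perm (Fin (m+1))) :=
    univ.filter (fun σ => (∀ i : Fin (m+1), (i : ℕ) < k → σ i ≠ i) ∧ σ km = km) with hT
  have hcm : c m k 0 = T.card := by
    rw [c_eq]
    apply Finset.card_bij (fun σ _ => Φ σ)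
    · intro σ hσ
      simp only [mem_filter, mem_univ, true_and] at hσ
      simp only [hT, mem_filter, mem_univ, true_and]
      refine ⟨?_, hΦkm σ⟩
      intro i hi hfix
      by_cases hik : i = km
      · subst hik; simp [hkm] at hi
      · obtain ⟨j, rfl⟩ := hsurj i hik
        rw [hΦapp] at hfix
        have hj : (j : ℕ) < k := by
          have := hval j; rw [this] at hi; split_ifs at hi <;> omega
        exact hσ j hj (Fin.succAbove_right_injective hfix)
    · intro σ1 _ σ2 _ h
      refine Equiv.ext fun i => Fin.succAbove_right_injective (p := km) ?_
      rw [← hΦapp, ← hΦapp, h]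
    · intro τ hτ
      simp only [hT, mem_filter, mem_univ, true_and] at hτ
      obtain ⟨hτ1, hτ2⟩ := hτ
      have hne : ∀ x : Fin (m+1), x ≠ km ↔ τ x ≠ km := by
        intro x
        constructor
        · intro hx hc
          exact hx (τ.injective (by rw [hc, hτ2]))
        · intro hx hc; rw [hc] at hx; exact hx hτ2
      set ρ : Perm (Fin m) := e.symm.permCongr (τ.subtypePerm (fun x => (hne x).symm)) with hρdef
      have hρ : ∀ j, km.succAbove (ρ j) = τ (km.succAbove j) := by
        intro j
        have h1 : e (ρ j) = τ.subtypePerm (fun x => (hne x).symm) (e j) := by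
          simp [hρdef, Equiv.permCongr_apply]
        have h2 := congrArg Subtype.val h1
        rw [he] at h2
        rw [h2, ← he j]
        rfl
      refine ⟨ρ, ?_, ?_⟩
      · simp only [mem_filter, mem_univ, true_and]
        intro i hi hfix
        have hi' : ((km.succAbove i : Fin (m+1)) : ℕ) < k := by
          rw [hval i]; split_ifs <;> omega
        refine hτ1 (km.succAbove i) hi' ?_
        rw [← hρ, hfix]
      · refine Equiv.ext fun x => ?_
        by_cases hx : x = km
        · subst hx; rw [hΦkm, hτ2]
        · obtain ⟨j, rfl⟩ := hsurj x hx
          rw [hΦapp, hρ]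
  -- now decompose c (m+1) k 0
  rw [c_eq (m+1) (k+1), c_eq (m+1) k, hcm]
  rw [← Finset.card_union_of_disjoint]
  · congr 1
    ext σ
    simp only [hT, mem_union, mem_filter, mem_univ, true_and]
    constructor
    · rintro (h | ⟨h1, h2⟩)
      · intro i hi; exact h i (by omega)
      · exact h1
    · intro h
      by_cases hfix : σ km = km
      · exact Or.inr ⟨h, hfix⟩
      · refine Or.inl fun i hi hf => ?_
        rcases Nat.lt_or_ge (i : ℕ) k with h' | h'
        · exact h i h' hf
        · have : i = km := Fin.ext (by simp [hkm]; omega)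
          exact hfix (this ▸ hf)
  · rw [Finset.disjoint_left]
    intro σ hσ hσ'
    simp only [hT, mem_filter, mem_univ, true_and] at hσ hσ'
    exact hσ km (by simp [hkm]) hσ'.2

theorem stmt16 (n k : ℕ) (hk : k < n) :
    p n (k + 1) 0 = p n k 0 - (1 / (n : ℝ)) * p (n - 1) k 0 := by
  obtain ⟨m, rfl⟩ : ∃ m, n = m + 1 := ⟨n - 1, by omega⟩
  have hkey := key m k hk
  have hc : (c (m+1) (k+1) 0 : ℝ) = c (m+1) k 0 - c m k 0 := by
    have := congrArg (Nat.cast (R := ℝ)) hkey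
    push_cast at this ⊢
    linarith
  simp only [p, Nat.add_sub_cancel, hc]
  have hfact : (Nat.factorial (m+1) : ℝ) = (m+1) * Nat.factorial m := by
    push_cast [Nat.factorial_succ]; ring
  have h1 : (Nat.factorial m : ℝ) ≠ 0 := Nat.cast_ne_zero.mpr (Nat.factorial_ne_zero m)
  have h2 : ((m : ℝ) + 1) ≠ 0 := by positivity
  rw [hfact]
  field_simp
  push_cast
  ring
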